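/- arXiv:2012.13696 — 2 statements merged into one kernel-verified Lean document; each statement's English description precedes it below -/
import Mathlib

section
/- Let G = (V, E) be a finite simple graph with |V| = n, let θ : V → ℝ, and let w_0, ..., w_m be a walk in G that visits every vertex of V. Let v_1, ..., v_n be the enumeration of V in order of first appearance in the walk. Then the number of sign changes along the induced ordering is bounded by the number of unequal consecutive pairs along the walk: ∑_{i=1}^{n-1} 1[θ(v_{i+1}) ≠ θ(v_i)] ≤ ∑_{j=0}^{m-1} 1[θ(w_{j+1}) ≠ θ(w_j)]. -/
private lemma walk_const' {g : ℕ → ℝ} : ∀ {b c : ℕ}, b ≤ c →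
    (∀ j, b ≤ j → j < c → g (j + 1) = g j) → g c = g b := by
  intro b c
  induction c with
  | zero =>
    intro hbc _
    have : b = 0 := by omega
    subst this; rfl
  | succ c ih =>
    intro hbc h
    rcases eq_or_lt_of_le hbc with rfl | hlt
    · rfl
    · have hbc' : b ≤ c := by omega
      rw [h c hbc' (by omega)]
      exact ih hbc' (fun j hj hjc => h j hj (by omega))

private lemma one_le_sum_ind {g : ℕ → ℝ} {b c : ℕ} (hbc : b ≤ c) (hne : g c ≠ g b) :
    1 ≤ ∑ j ∈ Finset.Ico b c, (if g (j + 1) ≠ g j then (1 : ℕ) else 0) := by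
  by_contra hlt
  push_neg at hlt
  have hz : ∑ j ∈ Finset.Ico b c, (if g (j + 1) ≠ g j then (1 : ℕ) else 0) = 0 := by omega
  rw [Finset.sum_eq_zero_iff] at hz
  apply hne
  apply walk_const' hbc
  intro j hj hjc
  have := hz j (Finset.mem_Ico.mpr ⟨hj, hjc⟩)
  by_contra hne'
  simp [hne'] at this

/-- Let `G = (V, E)` be a finite simple graph with `|V| = n`, let `θ : V → ℝ`, and let
`w 0, …, w m` be a walk in `G` that visits every vertex of `V`.  Let `f u` denote the index of
the first appearance of the vertex `u` in the walk, and let `v : Fin n → V` be the enumeration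
of `V` in order of first appearance in the walk, i.e. the bijective enumeration along which the
first-appearance index `f ∘ v` is strictly increasing.  Then the number of change points along
the induced ordering is bounded by the number of unequal consecutive pairs along the walk:
`∑_{i=1}^{n-1} 1[θ(v_{i+1}) ≠ θ(v_i)] ≤ ∑_{j=0}^{m-1} 1[θ(w_{j+1}) ≠ θ(w_j)]`. -/
theorem first_appearance_change_points {V : Type*} [Fintype V] {n : ℕ}
    (hn : Fintype.card V = n) (G : SimpleGraph V) (θ : V → ℝ)
    (m : ℕ) (w : ℕ → V)
    (hwalk : ∀ j < m, G.Adj (w j) (w (j + 1)))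
    (hvisit : ∀ u : V, ∃ j ≤ m, w j = u)
    (f : V → ℕ)
    (hf_le : ∀ u, f u ≤ m)
    (hf_eq : ∀ u, w (f u) = u)
    (hf_first : ∀ u, ∀ j < f u, w j ≠ u)
    (v : Fin n → V) (hv : Function.Bijective v)
    (horder : StrictMono (f ∘ v)) :
    (∑ i : Fin n, if h : (i : ℕ) + 1 < n then
        (if θ (v ⟨(i : ℕ) + 1, h⟩) ≠ θ (v i) then 1 else 0) else 0)
      ≤ ∑ j ∈ Finset.range m, (if θ (w (j + 1)) ≠ θ (w j) then 1 else 0) := by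
  classical
  set g : ℕ → ℝ := fun j => θ (w j) with hg
  set a : Fin n → ℕ := f ∘ v with ha
  set T : Fin n → Finset ℕ := fun i =>
    if h : (i : ℕ) + 1 < n then Finset.Ico (a i) (a ⟨(i : ℕ) + 1, h⟩) else ∅ with hT
  -- step 1: pointwise bound
  have step1 : (∑ i : Fin n, if h : (i : ℕ) + 1 < n then
        (if θ (v ⟨(i : ℕ) + 1, h⟩) ≠ θ (v i) then 1 else 0) else 0)
      ≤ ∑ i : Fin n, ∑ j ∈ T i, (if g (j + 1) ≠ g j then (1 : ℕ) else 0) := by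
    apply Finset.sum_le_sum
    intro i _
    by_cases h : (i : ℕ) + 1 < n
    · simp only [h, dif_pos, hT]
      by_cases hne : θ (v ⟨(i : ℕ) + 1, h⟩) ≠ θ (v i)
      · rw [if_pos hne]
        have hle : a i ≤ a ⟨(i : ℕ) + 1, h⟩ :=
          (horder (by exact Fin.mk_lt_mk.mpr (by omega) : i < ⟨(i : ℕ) + 1, h⟩)).le
        have hne' : g (a ⟨(i : ℕ) + 1, h⟩) ≠ g (a i) := by
          simpa [hg, ha, hf_eq] using hne
        exact one_le_sum_ind hle hne'
      · simp [hne]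
    · simp [h, hT]
  refine step1.trans ?_
  -- step 2: disjoint union bound
  have key : ∀ i i' : Fin n, i < i' → Disjoint (T i) (T i') := by
    intro i i' hlt
    simp only [Finset.disjoint_left, hT]
    intro x hx hx'
    by_cases h : (i : ℕ) + 1 < n
    · simp only [h, dif_pos, Finset.mem_Ico] at hx
      by_cases h' : (i' : ℕ) + 1 < n
      · simp only [h', dif_pos, Finset.mem_Ico] at hx'
        have : a ⟨(i : ℕ) + 1, h⟩ ≤ a i' :=
          horder.monotone (by exact Fin.mk_le_mk.mpr (by omega))
        omega
      · simp [h'] at hx'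
    · simp [h] at hx
  have hdisj : ((Finset.univ : Finset (Fin n)) : Set (Fin n)).PairwiseDisjoint T := by
    intro i _ i' _ hne
    rcases hne.lt_or_gt with hlt | hlt
    · exact key _ _ hlt
    · exact (key _ _ hlt).symm
  have hsub : (Finset.univ : Finset (Fin n)).biUnion T ⊆ Finset.range m := by
    intro x hx
    simp only [Finset.mem_biUnion] at hx
    obtain ⟨i, _, hxi⟩ := hx
    by_cases h : (i : ℕ) + 1 < n
    · simp only [hT, h, dif_pos, Finset.mem_Ico] at hxi
      have : a ⟨(i : ℕ) + 1, h⟩ ≤ m := hf_le _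
      exact Finset.mem_range.mpr (by omega)
    · simp [hT, h] at hxi
  calc ∑ i : Fin n, ∑ j ∈ T i, (if g (j + 1) ≠ g j then (1 : ℕ) else 0)
      = ∑ j ∈ (Finset.univ : Finset (Fin n)).biUnion T,
          (if g (j + 1) ≠ g j then (1 : ℕ) else 0) := (Finset.sum_biUnion hdisj).symm
    _ ≤ ∑ j ∈ Finset.range m, (if g (j + 1) ≠ g j then (1 : ℕ) else 0) :=
        Finset.sum_le_sum_of_subset hsub
    _ = ∑ j ∈ Finset.range m, (if θ (w (j + 1)) ≠ θ (w j) then 1 else 0) := rfl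
end

section
/- Let G = (V, E) be a finite connected simple graph with |V| = n ≥ 1 and let θ : V → ℝ. Then there exists an enumeration v_1, ..., v_n of V (an ordering obtained from a depth-first search) such that ∑_{i=1}^{n-1} 1[θ(v_{i+1}) ≠ θ(v_i)] ≤ 2 ∑_{{u,v} ∈ E} 1[θ(u) ≠ θ(v)]; in particular, if the number of edges of G across which θ changes value is at most s, then the number of change points of θ along the DFS-induced chain is at most 2s. -/
section DFSChangePoint

variable {V : Type*}


noncomputable def cpt (θ : V → ℝ) (a b : V) : ℕ := if θ a ≠ θ b then 1 else 0

lemma cpt_comm (θ : V → ℝ) (a b : V) : cpt θ a b = cpt θ b a := by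
  unfold cpt; exact if_congr ne_comm rfl rfl

lemma cpt_tri (θ : V → ℝ) (x y a : V) : cpt θ x a ≤ cpt θ y a + cpt θ x y := by
  simp only [cpt]
  by_cases h1 : θ x = θ a <;> by_cases h2 : θ y = θ a <;> by_cases h3 : θ x = θ y <;>
    simp_all

noncomputable def chg (θ : V → ℝ) : V → List V → ℕ
  | _, [] => 0
  | p, a :: t => cpt θ p a + chg θ a t

@[simp] lemma chg_nil (θ : V → ℝ) (p : V) : chg θ p [] = 0 := rfl
@[simp] lemma chg_cons (θ : V → ℝ) (p a : V) (t : List V) :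
    chg θ p (a :: t) = cpt θ p a + chg θ a t := rfl

lemma chg_switch (θ : V → ℝ) (x y : V) (l : List V) :
    chg θ x l ≤ chg θ y l + cpt θ x y := by
  cases l with
  | nil => simp
  | cons a t => simp only [chg_cons]; have := cpt_tri θ x y a; omega

lemma chg_le_append (θ : V → ℝ) (p : V) (t t2 : List V) :
    chg θ p t ≤ chg θ p (t ++ t2) := by
  induction t generalizing p with
  | nil => simp
  | cons a t ih => simp only [List.cons_append, chg_cons]; exact Nat.add_le_add_left (ih a) _

lemma chg_insert_head (θ : V → ℝ) (x y : V) (l : List V) :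
    chg θ y (x :: l) ≤ chg θ y l + 2 * cpt θ x y := by
  simp only [chg_cons]
  have h1 := chg_switch θ x y l
  have h2 := cpt_comm θ y x
  omega

lemma chg_insert_mid (θ : V → ℝ) (x y : V) (l1 l2 : List V) (p : V) :
    chg θ p (l1 ++ y :: x :: l2) ≤ chg θ p (l1 ++ y :: l2) + 2 * cpt θ x y := by
  induction l1 generalizing p with
  | nil =>
    simp only [List.nil_append, chg_cons]
    have h1 := chg_switch θ x y l2
    have h2 := cpt_comm θ y x
    omega
  | cons a t ih => simp only [List.cons_append, chg_cons]; have := ih a; omega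


lemma lift_reach (G : SimpleGraph V) (x : V) {u v : V}
    (p : G.Walk u v) (hp : x ∉ p.support) (hu : u ≠ x) (hv : v ≠ x) :
    (G.comap (Subtype.val : {w : V // w ≠ x} → V)).Reachable ⟨u, hu⟩ ⟨v, hv⟩ := by
  induction p with
  | nil => exact SimpleGraph.Reachable.refl _
  | @cons a b c hab q ih =>
    simp only [SimpleGraph.Walk.support_cons, List.mem_cons, not_or] at hp
    have hb : b ≠ x := fun hbx => hp.2 (hbx ▸ q.start_mem_support)
    have hadj : (G.comap (Subtype.val : {w : V // w ≠ x} → V)).Adj ⟨a, hu⟩ ⟨b, hb⟩ := hab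
    exact hadj.reachable.trans (ih hp.2 hb hv)

lemma exists_noncut (G : SimpleGraph V) [Fintype V] [DecidableEq V] (hG : G.Connected)
    (hcard : 2 ≤ Fintype.card V) :
    ∃ (x y : V), G.Adj x y ∧
      (G.comap (Subtype.val : {w : V // w ≠ x} → V)).Connected := by
  classical
  obtain ⟨r⟩ := hG.nonempty
  obtain ⟨x, -, hx⟩ := Finset.exists_max_image Finset.univ (G.dist r) ⟨r, Finset.mem_univ r⟩
  obtain ⟨z, hz⟩ := Fintype.exists_ne_of_one_lt_card hcard r
  have hzr : 0 < G.dist r z := hG.pos_dist_of_ne (Ne.symm hz)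
  have hxr : x ≠ r := by
    intro h
    have h2 := hx z (Finset.mem_univ z)
    rw [h] at h2
    simp only [SimpleGraph.dist_self, Nat.le_zero] at h2
    omega
  obtain ⟨p⟩ := hG.preconnected x r
  obtain ⟨y, hxy⟩ : ∃ y, G.Adj x y := by
    cases p with
    | nil => exact absurd rfl hxr
    | cons h q => exact ⟨_, h⟩
  haveI : Nonempty {w : V // w ≠ x} := ⟨⟨y, hxy.ne'⟩⟩
  refine ⟨x, y, hxy, ⟨?_⟩⟩
  have key : ∀ (u : V) (hu : u ≠ x),
      (G.comap (Subtype.val : {w : V // w ≠ x} → V)).Reachable ⟨u, hu⟩ ⟨r, Ne.symm hxr⟩ := by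
    intro u hu
    obtain ⟨q, hq⟩ := hG.exists_walk_length_eq_dist u r
    refine lift_reach G x q ?_ hu (Ne.symm hxr)
    intro hmem
    have hq1 : 1 ≤ (q.takeUntil x hmem).length := by
      rcases Nat.eq_zero_or_pos (q.takeUntil x hmem).length with h0 | h1
      · exact absurd (SimpleGraph.Walk.eq_of_length_eq_zero h0) hu
      · exact h1
    have hsplit := q.take_spec hmem
    have hlen : (q.takeUntil x hmem).length + (q.dropUntil x hmem).length = q.length := by
      rw [← SimpleGraph.Walk.length_append, hsplit]
    have hd : G.dist x r ≤ (q.dropUntil x hmem).length := SimpleGraph.dist_le _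
    have h1 : G.dist r u ≤ G.dist r x := hx u (Finset.mem_univ u)
    rw [SimpleGraph.dist_comm (u := r) (v := u), SimpleGraph.dist_comm (u := r) (v := x)] at h1
    omega
  exact fun u v => (key u.1 u.2).trans (key v.1 v.2).symm


noncomputable def F (θ : V → ℝ) : Sym2 V → ℕ :=
  Sym2.lift ⟨fun a b => if θ a ≠ θ b then 1 else 0, fun a b => by exact if_congr ne_comm rfl rfl⟩


lemma F_mk (θ : V → ℝ) (a b : V) : F θ s(a, b) = cpt θ a b := rfl

instance (G : SimpleGraph V) [DecidableRel G.Adj] {α : Type*} (f : α → V) :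
    DecidableRel (G.comap f).Adj := fun a b => inferInstanceAs (Decidable (G.Adj _ _))

lemma edge_sum (G : SimpleGraph V) [Fintype V] [DecidableEq V] [DecidableRel G.Adj]
    {x y : V} (hxy : G.Adj x y) (θ : V → ℝ) :
    (∑ e ∈ (G.comap (Subtype.val : {w : V // w ≠ x} → V)).edgeFinset,
      F (θ ∘ Subtype.val) e) + cpt θ x y ≤ ∑ e ∈ G.edgeFinset, F θ e := by
  classical
  set T : Finset (Sym2 V) :=
    (G.comap (Subtype.val : {w : V // w ≠ x} → V)).edgeFinset.image (Sym2.map Subtype.val)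
    with hT
  have hsub : insert s(x, y) T ⊆ G.edgeFinset := by
    intro e he
    rcases Finset.mem_insert.mp he with rfl | he
    · exact SimpleGraph.mem_edgeFinset.mpr hxy
    · obtain ⟨e', he', rfl⟩ := Finset.mem_image.mp he
      induction e' with
      | _ a b =>
        rw [Sym2.map_pair_eq]
        rw [SimpleGraph.mem_edgeFinset, SimpleGraph.mem_edgeSet] at he' ⊢
        exact he'
  have hxT : s(x, y) ∉ T := by
    intro h
    obtain ⟨e', _, heq⟩ := Finset.mem_image.mp h
    have hx : x ∈ Sym2.map Subtype.val e' := heq ▸ Sym2.mem_mk_left x y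
    obtain ⟨a, _, ha⟩ := Sym2.mem_map.mp hx
    exact a.2 ha
  have h1 : ∑ e ∈ insert s(x, y) T, F θ e ≤ ∑ e ∈ G.edgeFinset, F θ e :=
    Finset.sum_le_sum_of_subset hsub
  rw [Finset.sum_insert hxT] at h1
  have h2 : ∑ e ∈ T, F θ e = ∑ e ∈ (G.comap (Subtype.val : {w : V // w ≠ x} → V)).edgeFinset, F (θ ∘ Subtype.val) e := by
    rw [hT, Finset.sum_image (fun a _ b _ h => Sym2.map.injective Subtype.val_injective h)]
    refine Finset.sum_congr rfl fun e _ => ?_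
    induction e with
    | _ a b => rw [Sym2.map_pair_eq]; rfl
  rw [h2, F_mk] at h1
  omega
lemma chg_map {W : Type*} (f : W → V) (θ : V → ℝ) (p : W) (l : List W) :
    chg (θ ∘ f) p l = chg θ (f p) (l.map f) := by
  induction l generalizing p with
  | nil => rfl
  | cons a t ih => simp only [List.map_cons, chg_cons, ih]; rfl

universe u

theorem key (n : ℕ) : ∀ (V : Type u) [Fintype V] [DecidableEq V] (G : SimpleGraph V)
    [DecidableRel G.Adj], Fintype.card V = n → G.Connected → ∀ θ : V → ℝ,
    ∃ (a : V) (t : List V), (a :: t).Nodup ∧ (∀ w : V, w ∈ a :: t) ∧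
      chg θ a (t ++ [a]) ≤ 2 * ∑ e ∈ G.edgeFinset, F θ e := by
  induction n with
  | zero =>
    intro V _ _ G _ hcard hG θ
    haveI := hG.nonempty
    exact absurd hcard Fintype.card_ne_zero
  | succ n ih =>
    intro V _ _ G _ hcard hG θ
    by_cases hn : n = 0
    · -- single vertex
      subst hn
      obtain ⟨a, ha⟩ := Fintype.card_eq_one_iff.mp hcard
      refine ⟨a, [], by simp, fun w => by simp [ha w], ?_⟩
      simp [cpt]
    · have h2 : 2 ≤ Fintype.card V := by omega
      obtain ⟨x, y, hxy, hconn⟩ := exists_noncut G hG h2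
      have hcard' : Fintype.card {w : V // w ≠ x} = n := by
        have h1 : Fintype.card {w : V // w ≠ x} =
            Fintype.card V - Fintype.card {w : V // w = x} :=
          Fintype.card_subtype_compl _
        rw [Fintype.card_subtype_eq] at h1
        omega
      obtain ⟨a', t', hnd', hall', hle'⟩ :=
        ih {w : V // w ≠ x} (G.comap Subtype.val) hcard' hconn (θ ∘ Subtype.val)
      have hbound := edge_sum G hxy θ
      -- mapped list
      have hndm : ((a' :: t').map Subtype.val).Nodup := hnd'.map Subtype.val_injective
      have hxm : x ∉ (a' :: t').map Subtype.val := by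
        intro hx
        obtain ⟨w, _, hw⟩ := List.mem_map.mp hx
        exact w.2 hw
      have hallm : ∀ w : V, w ≠ x → w ∈ (a' :: t').map Subtype.val := fun w hw =>
        List.mem_map.mpr ⟨⟨w, hw⟩, hall' ⟨w, hw⟩, rfl⟩
      have hchg' : chg θ a'.1 (t'.map Subtype.val ++ [a'.1]) ≤
          2 * ∑ e ∈ (G.comap (Subtype.val : {w : V // w ≠ x} → V)).edgeFinset,
            F (θ ∘ Subtype.val) e := by
        have := chg_map (Subtype.val : {w : V // w ≠ x} → V) θ a' (t' ++ [a'])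
        simp only [List.map_append, List.map_cons, List.map_nil] at this
        rw [← this]
        exact hle'
      rcases List.mem_cons.mp (hall' ⟨y, hxy.ne'⟩) with hya | hyt
      · -- y = a' : new list is a'.1 :: x :: map t'
        refine ⟨a'.1, x :: t'.map Subtype.val, ?_, ?_, ?_⟩
        · have hmapc : (a' :: t').map Subtype.val = a'.1 :: t'.map Subtype.val := by simp
          rw [hmapc] at hndm hxm
          simp only [List.nodup_cons, List.mem_cons, not_or] at hndm hxm ⊢
          exact ⟨⟨fun h => hxm.1 h.symm, hndm.1⟩, hxm.2, hndm.2⟩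
        · intro w
          by_cases hw : w = x
          · simp [hw]
          · have := hallm w hw
            simp only [List.map_cons, List.mem_cons] at this ⊢
            tauto
        · have hins := chg_insert_head θ x a'.1 (t'.map Subtype.val ++ [a'.1])
          have hxy' : cpt θ x a'.1 = cpt θ x y := by rw [← hya]
          calc chg θ a'.1 ((x :: t'.map Subtype.val) ++ [a'.1])
              = chg θ a'.1 (x :: (t'.map Subtype.val ++ [a'.1])) := by simp
            _ ≤ chg θ a'.1 (t'.map Subtype.val ++ [a'.1]) + 2 * cpt θ x a'.1 := hins
            _ ≤ 2 * ∑ e ∈ (G.comap (Subtype.val : {w : V // w ≠ x} → V)).edgeFinset,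
                  F (θ ∘ Subtype.val) e + 2 * cpt θ x y := by
                rw [hxy']; exact Nat.add_le_add_right hchg' _
            _ ≤ 2 * ∑ e ∈ G.edgeFinset, F θ e := by omega
      · -- y ∈ t' : t' = s' ++ y' :: u'
        obtain ⟨s', u', rfl⟩ := List.append_of_mem hyt
        refine ⟨a'.1, s'.map Subtype.val ++ y :: x :: u'.map Subtype.val, ?_, ?_, ?_⟩
        · have : (a'.1 :: (s'.map Subtype.val ++ y :: x :: u'.map Subtype.val)) =
              ((a'.1 :: s'.map Subtype.val ++ [y]) ++ x :: u'.map Subtype.val) := by simp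
          rw [this, List.nodup_middle]
          simp only [List.nodup_cons]
          constructor
          · intro h
            apply hxm
            have : ((a' :: (s' ++ ⟨y, hxy.ne'⟩ :: u')).map Subtype.val) =
                (a'.1 :: s'.map Subtype.val ++ [y]) ++ u'.map Subtype.val := by simp
            rw [this]
            exact h
          · have : ((a' :: (s' ++ ⟨y, hxy.ne'⟩ :: u')).map Subtype.val) =
                (a'.1 :: s'.map Subtype.val ++ [y]) ++ u'.map Subtype.val := by simp
            rw [this] at hndm
            exact hndm
        · intro w
          by_cases hw : w = x
          · subst hw; simp
          · have := hallm w hw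
            simp only [List.map_cons, List.map_append, List.map_cons, List.mem_cons,
              List.mem_append] at this ⊢
            tauto
        · have hins := chg_insert_mid θ x y (s'.map Subtype.val)
            (u'.map Subtype.val ++ [a'.1]) a'.1
          have heq1 : (s'.map Subtype.val ++ y :: x :: u'.map Subtype.val) ++ [a'.1] =
              s'.map Subtype.val ++ y :: x :: (u'.map Subtype.val ++ [a'.1]) := by simp
          have heq2 : s'.map Subtype.val ++ y :: (u'.map Subtype.val ++ [a'.1]) =
              ((s' ++ ⟨y, hxy.ne'⟩ :: u').map Subtype.val) ++ [a'.1] := by simp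
          rw [heq1]
          calc chg θ a'.1 (s'.map Subtype.val ++ y :: x :: (u'.map Subtype.val ++ [a'.1]))
              ≤ chg θ a'.1 (s'.map Subtype.val ++ y :: (u'.map Subtype.val ++ [a'.1]))
                  + 2 * cpt θ x y := hins
            _ = chg θ a'.1 (((s' ++ ⟨y, hxy.ne'⟩ :: u').map Subtype.val) ++ [a'.1])
                  + 2 * cpt θ x y := by rw [heq2]
            _ ≤ 2 * ∑ e ∈ (G.comap (Subtype.val : {w : V // w ≠ x} → V)).edgeFinset,
                  F (θ ∘ Subtype.val) e + 2 * cpt θ x y :=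
                Nat.add_le_add_right hchg' _
            _ ≤ 2 * ∑ e ∈ G.edgeFinset, F θ e := by omega
lemma sum_fin {V : Type*} (θ : V → ℝ) (t : List V) (a : V) (n : ℕ)
    (hlen : (a :: t).length = n) (v : Fin n → V)
    (hv : ∀ i : Fin n, v i = (a :: t).get (Fin.cast hlen.symm i)) :
    (∑ i : Fin n, if h : (i : ℕ) + 1 < n then
        (if θ (v ⟨(i : ℕ) + 1, h⟩) ≠ θ (v i) then 1 else 0) else 0) = chg θ a t := by
  subst hlen
  induction t generalizing a with
  | nil => simp
  | cons b t2 ih =>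
    simp only [List.length_cons]
    rw [Fin.sum_univ_succ]
    have h0 : (if h : ((0 : Fin (t2.length + 1 + 1)) : ℕ) + 1 < t2.length + 1 + 1 then
        (if θ (v ⟨((0 : Fin (t2.length + 1 + 1)) : ℕ) + 1, h⟩) ≠
          θ (v (0 : Fin (t2.length + 1 + 1))) then 1 else 0) else 0) = cpt θ a b := by
      rw [dif_pos (by simp)]
      rw [hv, hv]
      simp only [List.get_eq_getElem, Fin.coe_cast, Fin.val_zero, List.getElem_cons_zero,
        List.getElem_cons_succ]
      rw [cpt_comm]
      rfl
    rw [h0]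
    have h1 := ih b (fun i => (b :: t2).get (Fin.cast rfl i)) (fun i => rfl)
    rw [chg_cons, ← h1]
    congr 1
    refine Finset.sum_congr rfl fun i _ => ?_
    by_cases hi : (i : ℕ) + 1 < (b :: t2).length
    · rw [dif_pos (by simpa using Nat.succ_lt_succ hi), dif_pos hi]
      rw [hv, hv]
      simp
    · rw [dif_neg (by simpa using fun h => hi (Nat.lt_of_succ_lt_succ h)), dif_neg hi]

end DFSChangePoint

/-- Let `G = (V, E)` be a finite connected simple graph with `|V| = n ≥ 1` and let `θ : V → ℝ`.
Then there exists an enumeration `v 0, …, v (n-1)` of `V` (an ordering obtained from a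
depth-first search) such that the number of change points of `θ` along the induced chain is at
most twice the number of edges of `G` across which `θ` changes value:
`∑_{i=1}^{n-1} 1[θ(v_{i+1}) ≠ θ(v_i)] ≤ 2 ∑_{{u,u'} ∈ E} 1[θ(u) ≠ θ(u')]`.
In particular, if the edge sparsity `s = ∑_{{u,u'} ∈ E} 1[θ(u) ≠ θ(u')]` is at most `s`, the
number of change points along the DFS-induced chain is at most `2s`. -/
theorem dfs_change_point_bound {V : Type*} [Fintype V] [DecidableEq V] {n : ℕ}
    (hn : Fintype.card V = n) (hn1 : 1 ≤ n)
    (G : SimpleGraph V) [DecidableRel G.Adj] (hG : G.Connected) (θ : V → ℝ) :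
    ∃ v : Fin n → V, Function.Bijective v ∧
      (∑ i : Fin n, if h : (i : ℕ) + 1 < n then
          (if θ (v ⟨(i : ℕ) + 1, h⟩) ≠ θ (v i) then 1 else 0) else 0)
        ≤ 2 * ∑ e ∈ G.edgeFinset,
            Sym2.lift ⟨fun a b => if θ a ≠ θ b then 1 else 0,
              fun a b => by simp only [ne_comm]⟩ e := by
  obtain ⟨a, t, hnd, hall, hle⟩ := key n V G hn hG θ
  have huniv : (a :: t).toFinset = Finset.univ :=
    Finset.eq_univ_iff_forall.mpr fun w => List.mem_toFinset.mpr (hall w)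
  have hlen : (a :: t).length = n := by
    rw [← hn, ← Finset.card_univ, ← huniv, List.toFinset_card_of_nodup hnd]
  refine ⟨fun i => (a :: t).get (Fin.cast hlen.symm i), ⟨?_, ?_⟩, ?_⟩
  · intro i j hij
    have h := List.nodup_iff_injective_get.mp hnd hij
    have h2 := congrArg (Fin.cast hlen) h
    simpa [Fin.ext_iff] using h2
  · intro w
    obtain ⟨i, hi⟩ := List.mem_iff_get.mp (hall w)
    exact ⟨Fin.cast hlen i, hi⟩
  · have hsum := sum_fin θ t a n hlen (fun i => (a :: t).get (Fin.cast hlen.symm i))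
      (fun i => rfl)
    rw [hsum]
    calc chg θ a t ≤ chg θ a (t ++ [a]) := chg_le_append θ a t [a]
      _ ≤ 2 * ∑ e ∈ G.edgeFinset, F θ e := hle
      _ = _ := rfl
end
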